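/- For a positive integer n, the polynomial t^n + 1 has a divisor in ℤ[t] of every degree m with 1 ≤ m ≤ n if and only if n is odd and n is φ-practical. -/

import Mathlib

open Polynomial Finset

/-- A positive integer `n` is φ-practical if every integer `m` with `1 ≤ m ≤ n`
is a sum of totients of a subset of the divisors of `n`. -/
def IsPhiPractical (n : ℕ) : Prop :=
  0 < n ∧ ∀ m : ℕ, 1 ≤ m → m ≤ n →
    ∃ D : Finset ℕ, D ⊆ n.divisors ∧ m = ∑ d ∈ D, Nat.totient d

lemma cyclotomic_prime_int {a : ℕ} (ha : 0 < a) : Prime (cyclotomic a ℤ) :=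
  UniqueFactorizationMonoid.irreducible_iff_prime.mp (cyclotomic.irreducible ha)

/-- If `f` divides a product of cyclotomic polynomials indexed by a finset `T`,
then its degree is the sum of totients over a subset of `T`. -/
lemma key_lemma (T : Finset ℕ) (hT : ∀ a ∈ T, 0 < a) (f : Polynomial ℤ)
    (hdvd : f ∣ ∏ d ∈ T, cyclotomic d ℤ) :
    ∃ S ⊆ T, f.natDegree = ∑ d ∈ S, Nat.totient d := by
  classical
  induction T using Finset.induction_on generalizing f with
  | empty =>
    refine ⟨∅, Finset.Subset.refl _, ?_⟩
    simp only [Finset.prod_empty] at hdvd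
    simpa using Polynomial.natDegree_eq_zero_of_isUnit (isUnit_of_dvd_one hdvd)
  | @insert a T' hanotmem IH =>
    have ha' : 0 < a := hT a (Finset.mem_insert_self a T')
    have hT' : ∀ b ∈ T', 0 < b := fun b hb => hT b (Finset.mem_insert_of_mem hb)
    have hΦ : Prime (cyclotomic a ℤ) := cyclotomic_prime_int ha'
    rw [Finset.prod_insert hanotmem] at hdvd
    set P := ∏ d ∈ T', cyclotomic d ℤ with hP
    by_cases hpf : cyclotomic a ℤ ∣ f
    · obtain ⟨f', rfl⟩ := hpf
      obtain ⟨c, hc⟩ := hdvd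
      rw [mul_assoc] at hc
      have hf'P : f' ∣ P := ⟨c, mul_left_cancel₀ (cyclotomic_ne_zero a ℤ) hc⟩
      obtain ⟨S', hS'sub, hS'⟩ := IH hT' f' hf'P
      have haS' : a ∉ S' := fun h => hanotmem (hS'sub h)
      refine ⟨insert a S', Finset.insert_subset_insert a hS'sub, ?_⟩
      have hP0 : P ≠ 0 := Finset.prod_ne_zero_iff.mpr fun d _ => cyclotomic_ne_zero d ℤ
      have hf'0 : f' ≠ 0 := ne_zero_of_dvd_ne_zero hP0 hf'P
      rw [Polynomial.natDegree_mul (cyclotomic_ne_zero a ℤ) hf'0,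
        Finset.sum_insert haS', natDegree_cyclotomic, hS']
    · obtain ⟨c, hc⟩ := hdvd
      have hdvdc : cyclotomic a ℤ ∣ c := by
        rcases (hΦ.dvd_mul.mp ⟨P, hc.symm⟩) with h | h
        · exact absurd h hpf
        · exact h
      obtain ⟨c', rfl⟩ := hdvdc
      have hfP : P = f * c' := by
        apply mul_left_cancel₀ (cyclotomic_ne_zero a ℤ)
        rw [hc]; ring
      obtain ⟨S', hS'sub, hS'⟩ := IH hT' f ⟨c', hfP⟩
      exact ⟨S', hS'sub.trans (Finset.subset_insert a T'), hS'⟩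

lemma xPow_add_one_eq_prod (n : ℕ) (hn : 0 < n) :
    (X : Polynomial ℤ) ^ n + 1 =
      ∏ d ∈ (2 * n).divisors \ n.divisors, cyclotomic d ℤ := by
  classical
  have h2n : 0 < 2 * n := by omega
  have hsub : n.divisors ⊆ (2 * n).divisors :=
    Nat.divisors_subset_of_dvd h2n.ne' (dvd_mul_left n 2)
  have h1 := prod_cyclotomic_eq_X_pow_sub_one h2n ℤ
  have h2 := prod_cyclotomic_eq_X_pow_sub_one hn ℤ
  have h3 := Finset.prod_sdiff (f := fun d => cyclotomic d ℤ) hsub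
  have hne : ((X : Polynomial ℤ) ^ n - 1) ≠ 0 := by
    simpa using X_pow_sub_C_ne_zero hn (1 : ℤ)
  apply mul_left_cancel₀ hne
  rw [h2] at h3
  calc ((X : Polynomial ℤ) ^ n - 1) * ((X : Polynomial ℤ) ^ n + 1)
      = (X : Polynomial ℤ) ^ (2 * n) - 1 := by
        rw [mul_comm 2 n, pow_mul]; ring
    _ = (∏ d ∈ (2 * n).divisors \ n.divisors, cyclotomic d ℤ) *
          ((X : Polynomial ℤ) ^ n - 1) := by rw [← h1, ← h3]
    _ = ((X : Polynomial ℤ) ^ n - 1) *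
          ∏ d ∈ (2 * n).divisors \ n.divisors, cyclotomic d ℤ := mul_comm _ _

lemma mem_sdiff_iff (n : ℕ) (hn : 0 < n) (hodd : Odd n) (d : ℕ) :
    d ∈ (2 * n).divisors \ n.divisors ↔ ∃ e, e ∣ n ∧ d = 2 * e := by
  have h2n : 2 * n ≠ 0 := by omega
  constructor
  · intro hd
    rw [Finset.mem_sdiff, Nat.mem_divisors, Nat.mem_divisors] at hd
    obtain ⟨⟨hd2n, -⟩, hdn⟩ := hd
    have hde : 2 ∣ d := by
      by_contra h2d
      have hcop : Nat.Coprime d 2 := (Nat.coprime_two_right).mpr (Nat.odd_iff.mpr (by omega))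
      exact hdn ⟨hcop.dvd_of_dvd_mul_left hd2n, hn.ne'⟩
    obtain ⟨e, rfl⟩ := hde
    exact ⟨e, (mul_dvd_mul_iff_left (two_ne_zero)).mp hd2n, rfl⟩
  · rintro ⟨e, he, rfl⟩
    rw [Finset.mem_sdiff, Nat.mem_divisors, Nat.mem_divisors]
    refine ⟨⟨mul_dvd_mul_left 2 he, h2n⟩, fun h => ?_⟩
    have : (2 : ℕ) ∣ n := dvd_trans ⟨e, rfl⟩ h.1
    rw [Nat.odd_iff] at hodd
    omega

lemma odd_of_dvd_odd {e n : ℕ} (hodd : Odd n) (h : e ∣ n) : Odd e := by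
  rcases Nat.even_or_odd e with he | he
  · have h2 : 2 ∣ n := he.two_dvd.trans h
    have h1 := Nat.odd_iff.mp hodd
    omega
  · exact he

lemma totient_two_mul_odd {e : ℕ} (he : Odd e) :
    Nat.totient (2 * e) = Nat.totient e := by
  rw [Nat.totient_mul (Nat.coprime_two_left.mpr he), Nat.totient_two, one_mul]

theorem xPowAddOne_divisor_every_degree_iff (n : ℕ) (hn : 0 < n) :
    (∀ m : ℕ, 1 ≤ m → m ≤ n →
      ∃ f : Polynomial ℤ, f.natDegree = m ∧ f ∣ (Polynomial.X ^ n + 1)) ↔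
    (Odd n ∧ IsPhiPractical n) := by
  classical
  constructor
  · intro H
    have hodd : Odd n := by
      by_contra hev
      rw [Nat.not_odd_iff_even] at hev
      obtain ⟨f, hf1, g, hg⟩ := H 1 le_rfl hn
      have hlc : f.leadingCoeff * g.leadingCoeff = 1 := by
        have h := congrArg Polynomial.leadingCoeff hg
        rw [Polynomial.leadingCoeff_mul, show ((X : Polynomial ℤ)^n + 1) = X^n + C 1 by simp,
          Polynomial.leadingCoeff_X_pow_add_C hn] at h
        exact h.symm
      have hunit : IsUnit f.leadingCoeff := IsUnit.of_mul_eq_one _ hlc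
      set a := f.coeff 1 with hadef
      set b := f.coeff 0 with hbdef
      have hfa : f.leadingCoeff = a := by
        rw [Polynomial.leadingCoeff, hf1]
      have ha : a = 1 ∨ a = -1 := Int.isUnit_iff.mp (hfa ▸ hunit)
      have hfform : f = C a * X + C b := Polynomial.eq_X_add_C_of_natDegree_le_one hf1.le
      -- root r = -a*b
      have hroot : f.eval (-(a * b)) = 0 := by
        rw [hfform]
        simp only [Polynomial.eval_add, Polynomial.eval_mul, Polynomial.eval_C,
          Polynomial.eval_X]
        rcases ha with h | h <;> rw [h] <;> ring
      have heval : ((X : Polynomial ℤ)^n + 1).eval (-(a * b)) = 0 := by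
        rw [hg]
        simp [hroot]
      rw [Polynomial.eval_add, Polynomial.eval_pow, Polynomial.eval_X, Polynomial.eval_one] at heval
      have : (0:ℤ) ≤ (-(a * b)) ^ n := hev.pow_nonneg _
      omega
    refine ⟨hodd, hn, fun m hm1 hmn => ?_⟩
    obtain ⟨f, hfm, hfdvd⟩ := H m hm1 hmn
    rw [xPow_add_one_eq_prod n hn] at hfdvd
    obtain ⟨S, hSsub, hSdeg⟩ := key_lemma _ (fun a ha => Nat.pos_of_mem_divisors
      (Finset.mem_sdiff.mp ha).1) f hfdvd
    -- each element of S is 2 * e with e ∣ n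
    have hS2 : ∀ d ∈ S, ∃ e, e ∣ n ∧ d = 2 * e := fun d hd =>
      (mem_sdiff_iff n hn hodd d).mp (hSsub hd)
    refine ⟨S.image (· / 2), ?_, ?_⟩
    · intro x hx
      rw [Finset.mem_image] at hx
      obtain ⟨d, hd, rfl⟩ := hx
      obtain ⟨e, he, rfl⟩ := hS2 d hd
      rw [Nat.mul_div_cancel_left e (by norm_num)]
      exact Nat.mem_divisors.mpr ⟨he, hn.ne'⟩
    · rw [← hfm, hSdeg]
      rw [Finset.sum_image]
      · apply Finset.sum_congr rfl
        intro d hd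
        obtain ⟨e, he, rfl⟩ := hS2 d hd
        rw [Nat.mul_div_cancel_left e (by norm_num)]
        exact totient_two_mul_odd (odd_of_dvd_odd hodd he)
      · intro x hx y hy hxy
        obtain ⟨e, -, rfl⟩ := hS2 x hx
        obtain ⟨e', -, rfl⟩ := hS2 y hy
        beta_reduce at hxy
        rw [Nat.mul_div_cancel_left e (by norm_num),
          Nat.mul_div_cancel_left e' (by norm_num)] at hxy
        rw [hxy]
  · rintro ⟨hodd, -, hpr⟩ m hm1 hmn
    obtain ⟨D, hDsub, hDsum⟩ := hpr m hm1 hmn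
    refine ⟨∏ d ∈ D, cyclotomic (2 * d) ℤ, ?_, ?_⟩
    · rw [Polynomial.natDegree_prod _ _ (fun d _ => cyclotomic_ne_zero _ ℤ)]
      rw [hDsum]
      apply Finset.sum_congr rfl
      intro d hd
      rw [natDegree_cyclotomic]
      exact totient_two_mul_odd (odd_of_dvd_odd hodd (Nat.mem_divisors.mp (hDsub hd)).1)
    · rw [xPow_add_one_eq_prod n hn]
      have : ∏ d ∈ D, cyclotomic (2 * d) ℤ = ∏ d ∈ D.image (2 * ·), cyclotomic d ℤ := by
        rw [Finset.prod_image]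
        intro x _ y _ h
        beta_reduce at h
        omega
      rw [this]
      apply Finset.prod_dvd_prod_of_subset
      intro x hx
      rw [Finset.mem_image] at hx
      obtain ⟨e, he, rfl⟩ := hx
      exact (mem_sdiff_iff n hn hodd _).mpr ⟨e, (Nat.mem_divisors.mp (hDsub he)).1, rfl⟩
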